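/- Let m ∈ ℂ^d with (F_d m) = (a_0 e^{iθ_0}, …, a_{ρ-1} e^{iθ_{ρ-1}}, 0, …, 0)^T for real a_0,…,a_{ρ-1} and θ_0,…,θ_{ρ-1}, where ρ < d/2 and 2 ≤ κ ≤ ρ. If |a_0| > (ρ-1)|a_1| and |a_1| ≥ |a_2| ≥ … ≥ |a_{ρ-1}| > 0, then for every p with |p| ≤ κ-1 and every q ∈ [d]_0, (F_d((F_d m) ∘ S_p conj(F_d m)))_q ≠ 0; consequently μ_1 := min over such p, q of |(F_d((F_d m) ∘ S_p conj(F_d m)))_q| is strictly positive. -/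

import Mathlib

open Complex BigOperators Finset

/-- Discrete Fourier transform on `ℂ^d` (indexed by `ZMod d`). -/
noncomputable def dftV (d : ℕ) [NeZero d] (x : ZMod d → ℂ) : ZMod d → ℂ :=
  fun k => ∑ n : ZMod d, x n *
    Complex.exp (-2 * Real.pi * Complex.I * (n.val : ℂ) * (k.val : ℂ) / (d : ℂ))

/-- Circular shift: `(S_ℓ x)_n = x_{n+ℓ}`. -/
def shiftV {d : ℕ} (ℓ : ZMod d) (x : ZMod d → ℂ) : ZMod d → ℂ := fun n => x (n + ℓ)

/-- Reversal: `(R x)_n = x_{-n}`. -/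
def revV {d : ℕ} (x : ZMod d → ℂ) : ZMod d → ℂ := fun n => x (-n)

/-- Componentwise complex conjugation. -/
def conjV {d : ℕ} (x : ZMod d → ℂ) : ZMod d → ℂ := fun n => (starRingEnd ℂ) (x n)

/-- Hadamard (componentwise) product. -/
def hadV {d : ℕ} (x y : ZMod d → ℂ) : ZMod d → ℂ := fun n => x n * y n

/-- Circular convolution. -/
noncomputable def convV (d : ℕ) [NeZero d] (x y : ZMod d → ℂ) : ZMod d → ℂ :=
  fun ℓ => ∑ n : ZMod d, x n * y (ℓ - n)

/-- Modulation: `(W_ℓ x)_n = x_n e^{2πiℓn/d}`. -/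
noncomputable def modV {d : ℕ} (ℓ : ZMod d) (x : ZMod d → ℂ) : ZMod d → ℂ :=
  fun n => x n * Complex.exp (2 * Real.pi * Complex.I * (ℓ.val : ℂ) * (n.val : ℂ) / (d : ℂ))

lemma key_sum (ρ t : ℕ) (hρ2 : 2 ≤ ρ) (htρ : t ≤ ρ - 1) (a : ℕ → ℝ)
    (ha0 : ((ρ : ℝ) - 1) * |a 1| < |a 0|)
    (hmono : ∀ j : ℕ, 1 ≤ j → j + 1 ≤ ρ - 1 → |a (j + 1)| ≤ |a j|)
    (hlast : 0 < |a (ρ - 1)|)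
    (c : ℕ → ℂ)
    (habs : ∀ j, j < ρ - t → ‖c j‖ = |a j| * |a (j + t)|) :
    (∑ j ∈ Finset.range (ρ - t), c j) ≠ 0 := by
  have amono : ∀ i j : ℕ, 1 ≤ i → i ≤ j → j ≤ ρ - 1 → |a j| ≤ |a i| := by
    intro i j hi hij
    induction j, hij using Nat.le_induction with
    | base => intro _; exact le_rfl
    | succ n hn ih =>
      intro h
      exact (hmono n (hi.trans hn) h).trans (ih (by omega))
  have ha1nn : (0:ℝ) ≤ |a 1| := abs_nonneg _
  have hρ1 : (1:ℝ) ≤ (ρ:ℝ) - 1 := by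
    have : (2:ℝ) ≤ (ρ:ℝ) := by exact_mod_cast hρ2
    linarith
  have ha0pos : 0 < |a 0| := lt_of_le_of_lt (by nlinarith) ha0
  set B : ℝ := |a (max t 1)| with hB
  have hBnn : 0 ≤ B := abs_nonneg _
  have h0mem : 0 ∈ Finset.range (ρ - t) := by
    simp; omega
  intro hzero
  have hsplit : c 0 + ∑ j ∈ (Finset.range (ρ - t)).erase 0, c j = 0 := by
    rw [Finset.add_sum_erase _ c h0mem]; exact hzero
  have habs0 : ‖c 0‖ = |a 0| * |a t| := by
    simpa using habs 0 (by omega)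
  have hle : ‖c 0‖ ≤ ∑ j ∈ (Finset.range (ρ - t)).erase 0, ‖c j‖ := by
    have : c 0 = -∑ j ∈ (Finset.range (ρ - t)).erase 0, c j := by linear_combination hsplit
    rw [this, norm_neg]
    exact norm_sum_le _ _
  have hterm : ∀ j ∈ (Finset.range (ρ - t)).erase 0, ‖c j‖ ≤ |a 1| * B := by
    intro j hj
    rw [Finset.mem_erase, Finset.mem_range] at hj
    obtain ⟨hj0, hjr⟩ := hj
    rw [habs j hjr]
    have h1 : |a j| ≤ |a 1| := amono 1 j le_rfl (by omega) (by omega)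
    have h2 : |a (j + t)| ≤ B := amono (max t 1) (j + t) (le_max_right _ _) (by omega) (by omega)
    exact mul_le_mul h1 h2 (abs_nonneg _) ha1nn
  have hsum : ∑ j ∈ (Finset.range (ρ - t)).erase 0, ‖c j‖
      ≤ ((ρ - t - 1 : ℕ) : ℝ) * (|a 1| * B) := by
    calc ∑ j ∈ (Finset.range (ρ - t)).erase 0, ‖c j‖
        ≤ ∑ _j ∈ (Finset.range (ρ - t)).erase 0, (|a 1| * B) := Finset.sum_le_sum hterm
      _ = ((Finset.range (ρ - t)).erase 0).card * (|a 1| * B) := by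
          rw [Finset.sum_const, nsmul_eq_mul]
      _ = ((ρ - t - 1 : ℕ) : ℝ) * (|a 1| * B) := by
          rw [Finset.card_erase_of_mem h0mem, Finset.card_range]
  have hcastle : ((ρ - t - 1 : ℕ) : ℝ) ≤ (ρ:ℝ) - 1 := by
    have h1 : (ρ - t - 1 : ℕ) ≤ ρ - 1 := by omega
    have h2 : ((ρ - t - 1 : ℕ) : ℝ) ≤ ((ρ - 1 : ℕ) : ℝ) := by exact_mod_cast h1
    have h3 : ((ρ - 1 : ℕ) : ℝ) = (ρ:ℝ) - 1 := by
      have : (1:ℕ) ≤ ρ := by omega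
      push_cast [this]; ring
    linarith
  have hchain : |a 0| * |a t| ≤ ((ρ:ℝ) - 1) * (|a 1| * B) := by
    rw [← habs0]
    refine hle.trans (hsum.trans ?_)
    exact mul_le_mul_of_nonneg_right hcastle (by positivity)
  rcases Nat.eq_zero_or_pos t with ht0 | ht1
  · subst ht0
    have hBeq : B = |a 1| := by rw [hB]; norm_num
    rw [hBeq] at hchain
    have h4 : ((ρ:ℝ) - 1) * |a 1| * |a 1| ≤ |a 0| * |a 1| :=
      mul_le_mul_of_nonneg_right ha0.le ha1nn
    have h5 : |a 0| * |a 1| ≤ |a 0| * (((ρ:ℝ) - 1) * |a 1|) := by nlinarith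
    have h6 : |a 0| * (((ρ:ℝ) - 1) * |a 1|) < |a 0| * |a 0| :=
      mul_lt_mul_of_pos_left ha0 ha0pos
    nlinarith
  · have hBeq : B = |a t| := by rw [hB, max_eq_left ht1]
    have hatpos : 0 < |a t| := by
      rcases eq_or_lt_of_le htρ with h | h
      · rwa [h]
      · exact lt_of_lt_of_le hlast (amono t (ρ - 1) ht1 (by omega) le_rfl)
    rw [hBeq] at hchain
    nlinarith


lemma sum_reduce {d : ℕ} [NeZero d] (r : ℕ) (F : ZMod d → ℂ) (emb : ℕ → ZMod d)
    (hinj : ∀ j1 ∈ Finset.range r, ∀ j2 ∈ Finset.range r, emb j1 = emb j2 → j1 = j2)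
    (hsupp : ∀ n : ZMod d, F n ≠ 0 → ∃ j ∈ Finset.range r, n = emb j) :
    ∑ n : ZMod d, F n = ∑ j ∈ Finset.range r, F (emb j) := by
  rw [← Finset.sum_image hinj]
  apply (Finset.sum_subset (Finset.subset_univ _) _).symm
  intro n _ hn
  by_contra hF
  obtain ⟨j, hj, rfl⟩ := hsupp n hF
  exact hn (Finset.mem_image_of_mem emb hj)


/-- nonvanishing of the mask-dependent quantities for bandlimited masks. -/
theorem mu1_pos (d ρ κ : ℕ) [NeZero d] (hρ : 2 * ρ < d) (hκ2 : 2 ≤ κ) (hκρ : κ ≤ ρ)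
    (m : ZMod d → ℂ) (a θ : ℕ → ℝ)
    (hm : ∀ k : ZMod d, dftV d m k =
      if k.val < ρ then (a k.val : ℂ) * Complex.exp (Complex.I * (θ k.val : ℂ)) else 0)
    (ha0 : ((ρ : ℝ) - 1) * |a 1| < |a 0|)
    (hmono : ∀ j : ℕ, 1 ≤ j → j + 1 ≤ ρ - 1 → |a (j + 1)| ≤ |a j|)
    (hlast : 0 < |a (ρ - 1)|) :
    ∀ p : ℤ, p.natAbs ≤ κ - 1 → ∀ q : ZMod d,
      dftV d (hadV (dftV d m) (shiftV ((p : ℤ) : ZMod d) (conjV (dftV d m)))) q ≠ 0 := by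
  intro p hp q
  have hd : 0 < d := Nat.pos_of_ne_zero (NeZero.ne d)
  have hρ2 : 2 ≤ ρ := hκ2.trans hκρ
  set t := p.natAbs with htdef
  have htρ : t ≤ ρ - 1 := hp.trans (by omega)
  set M := dftV d m with hMdef
  set pz : ZMod d := ((p : ℤ) : ZMod d) with hpzdef
  set E : ZMod d → ℂ := fun n =>
    Complex.exp (-2 * Real.pi * Complex.I * (n.val : ℂ) * (q.val : ℂ) / (d : ℂ)) with hEdef
  set F : ZMod d → ℂ := fun n => (M n * (starRingEnd ℂ) (M (n + pz))) * E n with hFdef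
  have hEabs : ∀ n : ZMod d, ‖E n‖ = 1 := by
    intro n
    have h : (-2 * (Real.pi : ℂ) * Complex.I * ((n.val : ℕ) : ℂ) * ((q.val : ℕ) : ℂ) / (d : ℂ))
        = ((-2 * Real.pi * (n.val : ℝ) * (q.val : ℝ) / (d : ℝ) : ℝ) : ℂ) * Complex.I := by
      push_cast; ring
    simp only [hEdef]
    rw [h, Complex.norm_exp_ofReal_mul_I]
  have hMabs : ∀ n : ZMod d, n.val < ρ → ‖M n‖ = |a n.val| := by
    intro n hn
    rw [hm, if_pos hn, norm_mul, Complex.norm_real, Real.norm_eq_abs, mul_comm Complex.I,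
      Complex.norm_exp_ofReal_mul_I, mul_one]
  have hM0 : ∀ n : ZMod d, ¬ n.val < ρ → M n = 0 := fun n hn => by
    rw [hm, if_neg hn]
  have hFne : ∀ n : ZMod d, F n ≠ 0 → n.val < ρ ∧ (n + pz).val < ρ := by
    intro n hn
    constructor
    · by_contra h; exact hn (by simp [hFdef, hM0 n h])
    · by_contra h; exact hn (by simp [hFdef, hM0 _ h])
  have hFabs : ∀ n : ZMod d, n.val < ρ → (n + pz).val < ρ →
      ‖F n‖ = |a n.val| * |a (n + pz).val| := by
    intro n h1 h2
    simp only [hFdef]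
    rw [norm_mul, norm_mul, Complex.norm_conj, hEabs, hMabs n h1, hMabs _ h2, mul_one]
  have hgoal : dftV d (hadV M (shiftV pz (conjV M))) q = ∑ n : ZMod d, F n := by
    simp only [dftV, hadV, shiftV, conjV, hFdef, hEdef]
  rw [hgoal]
  rcases le_or_gt 0 p with hp0 | hp0
  · -- p ≥ 0 : pz = (t : ZMod d)
    have hpzt : pz = ((t : ℕ) : ZMod d) := by
      rw [hpzdef, ← Int.natAbs_of_nonneg hp0, Int.cast_natCast]
    set emb : ℕ → ZMod d := fun j => ((j : ℕ) : ZMod d) with hemb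
    have hval1 : ∀ j, j < ρ - t → (emb j).val = j := fun j hj =>
      ZMod.val_cast_of_lt (by omega)
    have hval2 : ∀ j, j < ρ - t → (emb j + pz).val = j + t := by
      intro j hj
      rw [hpzt, hemb]
      have : ((j : ℕ) : ZMod d) + ((t : ℕ) : ZMod d) = ((j + t : ℕ) : ZMod d) := by push_cast; ring
      rw [this, ZMod.val_cast_of_lt (by omega)]
    rw [sum_reduce (ρ - t) F emb ?_ ?_]
    · exact key_sum ρ t hρ2 htρ a ha0 hmono hlast (fun j => F (emb j))
        (fun j hj => by rw [hFabs _ (by rw [hval1 j hj]; omega)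
          (by rw [hval2 j hj]; omega), hval1 j hj, hval2 j hj])
    · intro j1 hj1 j2 hj2 he
      rw [Finset.mem_range] at hj1 hj2
      have := congrArg ZMod.val he
      rwa [hval1 j1 hj1, hval1 j2 hj2] at this
    · intro n hn
      obtain ⟨h1, h2⟩ := hFne n hn
      have hnv : ((n.val : ℕ) : ZMod d) = n := ZMod.natCast_rightInverse n
      have hadd : n + pz = ((n.val + t : ℕ) : ZMod d) := by
        rw [hpzt]; push_cast; rw [hnv]
      have h2' : (n + pz).val = n.val + t := by
        rw [hadd, ZMod.val_cast_of_lt (by omega)]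
      rw [h2'] at h2
      refine ⟨n.val, Finset.mem_range.mpr (by omega), ?_⟩
      rw [hemb]; exact hnv.symm
  · -- p < 0 : pz = -(t : ZMod d)
    have hpt : p = -(t : ℤ) := by omega
    have hpzt : pz = -((t : ℕ) : ZMod d) := by
      rw [hpzdef]
      conv_lhs => rw [hpt]
      push_cast; ring
    have htd : t ≤ d := by omega
    have hneg : -((t : ℕ) : ZMod d) = ((d - t : ℕ) : ZMod d) := by
      have : ((d - t : ℕ) : ZMod d) + ((t : ℕ) : ZMod d) = ((d : ℕ) : ZMod d) := by
        rw [← Nat.cast_add]; congr 1; omega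
      rw [ZMod.natCast_self] at this
      linear_combination -this
    set emb : ℕ → ZMod d := fun j => ((j + t : ℕ) : ZMod d) with hemb
    have hval1 : ∀ j, j < ρ - t → (emb j).val = j + t := fun j hj =>
      ZMod.val_cast_of_lt (by omega)
    have hval2 : ∀ j, j < ρ - t → (emb j + pz).val = j := by
      intro j hj
      have : emb j + pz = ((j : ℕ) : ZMod d) := by
        rw [hemb, hpzt]; push_cast; ring
      rw [this, ZMod.val_cast_of_lt (by omega)]
    rw [sum_reduce (ρ - t) F emb ?_ ?_]
    · refine key_sum ρ t hρ2 htρ a ha0 hmono hlast (fun j => F (emb j)) (fun j hj => ?_)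
      rw [hFabs _ (by rw [hval1 j hj]; omega) (by rw [hval2 j hj]; omega),
        hval1 j hj, hval2 j hj, mul_comm]
    · intro j1 hj1 j2 hj2 he
      rw [Finset.mem_range] at hj1 hj2
      have := congrArg ZMod.val he
      rw [hval1 j1 hj1, hval1 j2 hj2] at this
      omega
    · intro n hn
      obtain ⟨h1, h2⟩ := hFne n hn
      have hnv : ((n.val : ℕ) : ZMod d) = n := ZMod.natCast_rightInverse n
      have hadd : n + pz = ((n.val + (d - t) : ℕ) : ZMod d) := by
        rw [hpzt, hneg]; push_cast; rw [hnv]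
      have htn : t ≤ n.val := by
        by_contra hlt
        push_neg at hlt
        have : (n + pz).val = n.val + (d - t) := by
          rw [hadd, ZMod.val_cast_of_lt (by omega)]
        omega
      have h2' : (n + pz).val = n.val - t := by
        rw [hadd, ZMod.val_natCast]
        have : n.val + (d - t) = (n.val - t) + d := by omega
        rw [this, Nat.add_mod_right, Nat.mod_eq_of_lt (by omega)]
      rw [h2'] at h2
      refine ⟨n.val - t, Finset.mem_range.mpr (by omega), ?_⟩
      have hh : (n.val - t) + t = n.val := by omega
      simp only [hemb, hh]
      exact hnv.symm
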